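/- Every l-Grigorchuk subshift is minimal; equivalently, the word η_l is uniformly recurrent. -/

import Mathlib

open Filter ENNReal

/-- The left shift on infinite words. -/
def shft {A : Type*} (y : ℕ → A) : ℕ → A := fun n => y (n + 1)

/-- `w` occurs as a factor of the infinite word `y`. -/
def FactorOf {A : Type*} (w : List A) (y : ℕ → A) : Prop :=
  ∃ k, w = (List.range w.length).map fun i => y (k + i)

/-- The language of a subshift `Y`: all finite factors of elements of `Y`. -/
def LangOf {A : Type*} (Y : Set (ℕ → A)) : Set (List A) :=
  {w | ∃ y ∈ Y, FactorOf w y}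

/-- The language of an infinite word `x`: all finite factors of `x`
(equals the language of the subshift `Ω(x)` generated by `x`). -/
def LangX {A : Type*} (x : ℕ → A) : Set (List A) :=
  {w | FactorOf w x}

/-- A subshift: a closed, shift-invariant set of infinite words. -/
def IsSubshift {A : Type*} [TopologicalSpace A] (Y : Set (ℕ → A)) : Prop :=
  IsClosed Y ∧ shft '' Y = Y

/-- The subshift generated by an infinite word `x`: the closure of its shift orbit. -/
def OmegaOf {A : Type*} [TopologicalSpace A] (x : ℕ → A) : Set (ℕ → A) :=
  closure {y | ∃ k, y = shft^[k] x}

/-- `Y` is aperiodic: it contains no periodic point. -/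
def Aperiodic {A : Type*} (Y : Set (ℕ → A)) : Prop :=
  ¬ ∃ y ∈ Y, ∃ k, 0 < k ∧ shft^[k] y = y

/-- `Q(n)`: the supremum of the powers `p` such that some word `W` of length `n`
in the language `L` has `W^p ∈ L`. -/
noncomputable def QfunL {A : Type*} (L : Set (List A)) (n : ℕ) : ℕ∞ :=
  sSup ((fun q : ℕ => (q : ℕ∞)) ''
    {q | ∃ W ∈ L, W.length = n ∧ (List.replicate q W).flatten ∈ L})

/-- The repetitive function `R(n)`: the smallest `r'` such that every word of
length `r'` in `L` contains all words of `L` of length `n` as factors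
(`⊤` if no such `r'` exists). -/
noncomputable def RfunL {A : Type*} (L : Set (List A)) (n : ℕ) : ℕ∞ :=
  sInf ((fun r : ℕ => (r : ℕ∞)) ''
    {r' | ∀ u ∈ L, u.length = r' → ∀ v ∈ L, v.length = n → v <:+: u})

/-- `Q_α = limsup Q(n)/n^(α-1)`. -/
noncomputable def Qalpha {A : Type*} (L : Set (List A)) (α : ℝ) : ℝ≥0∞ :=
  Filter.atTop.limsup fun n : ℕ => (QfunL L n : ℝ≥0∞) / (n : ℝ≥0∞) ^ (α - 1)

/-- `R_α = limsup R(n)/n^α`. -/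
noncomputable def Ralpha {A : Type*} (L : Set (List A)) (α : ℝ) : ℝ≥0∞ :=
  Filter.atTop.limsup fun n : ℕ => (RfunL L n : ℝ≥0∞) / (n : ℝ≥0∞) ^ α

/-- `A_{α,n}`: the infimum of `(|W|-|w|)/|w|^(1/α)` over `w, W` in the language with
`w` a proper nonempty prefix and suffix of `W` and `|W| = n`. -/
noncomputable def AfunL {A : Type*} (L : Set (List A)) (α : ℝ) (n : ℕ) : ℝ≥0∞ :=
  sInf {t | ∃ w W : List A, w ∈ L ∧ W ∈ L ∧ w ≠ [] ∧ w ≠ W ∧ w <+: W ∧ w <:+ W ∧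
    W.length = n ∧ t = ((W.length - w.length : ℕ) : ℝ≥0∞) / (w.length : ℝ≥0∞) ^ (1 / α)}

/-- `ℓ_α = liminf_n A_{α,n}`. -/
noncomputable def lalpha {A : Type*} (L : Set (List A)) (α : ℝ) : ℝ≥0∞ :=
  Filter.atTop.liminf (AfunL L α)

/-- `ℓ`: the repulsiveness constant (no restriction on `|W|`). -/
noncomputable def lconst {A : Type*} (L : Set (List A)) : ℝ≥0∞ :=
  sInf {t | ∃ w W : List A, w ∈ L ∧ W ∈ L ∧ w ≠ [] ∧ w ≠ W ∧ w <+: W ∧ w <:+ W ∧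
    t = ((W.length - w.length : ℕ) : ℝ≥0∞) / (w.length : ℝ≥0∞)}

/-- The four-letter alphabet `{a, x, y, z}` of the Grigorchuk subshift. -/
inductive GW : Type
  | a : GW
  | x : GW
  | y : GW
  | z : GW
  deriving DecidableEq

instance : Fintype GW :=
  ⟨{GW.a, GW.x, GW.y, GW.z}, fun c => by cases c <;> simp⟩

instance : TopologicalSpace GW := ⊥
instance : DiscreteTopology GW := ⟨rfl⟩
/-- The substitution `τ_b` on letters: `a ↦ (a, b, a)`, fixing the other letters. -/
def tauL (b : GW) : GW → List GW
  | GW.a => [GW.a, b, GW.a]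
  | c => [c]

/-- The substitution `τ_b` on words (monoid homomorphism). -/
def tauW (b : GW) (w : List GW) : List GW := w.flatMap (tauL b)

/-- For a sequence `l` (0-indexed: `l i` is `l_{i+1}` of the paper), `Nblk l j` is
the index of the block containing position `j`, i.e. the unique `n` with
`l 0 + ⋯ + l (n-1) ≤ j < l 0 + ⋯ + l n`;  this is `N(j) - 1` in the paper. -/
noncomputable def Nblk (l : ℕ → ℕ) (j : ℕ) : ℕ :=
  sInf {n : ℕ | j < ∑ i ∈ Finset.range (n + 1), l i}

/-- `q(j)` of the paper: `j` minus the sum of the lengths of the complete blocks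
before position `j`. -/
noncomputable def qrem (l : ℕ → ℕ) (j : ℕ) : ℕ :=
  j - ∑ i ∈ Finset.range (Nblk l j), l i

/-- The letter inserted at step `j + 1`: the blocks use `x, y, z` cyclically. -/
noncomputable def letterAt (l : ℕ → ℕ) (j : ℕ) : GW :=
  match (Nblk l j) % 3 with
  | 0 => GW.x
  | 1 => GW.y
  | _ => GW.z

/-- `gword l j = τ^{(j)}(a)`, via the recursion
`τ^{(j+1)}(a) = τ^{(j)}(a) β τ^{(j)}(a)` with `β = letterAt l j`. -/
noncomputable def gword (l : ℕ → ℕ) : ℕ → List GW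
  | 0 => [GW.a]
  | j + 1 => gword l j ++ letterAt l j :: gword l j

/-- The `l`-Grigorchuk word `η_l`: the unique infinite word having every
`τ^{(j)}(a)` as a prefix. -/
noncomputable def etaG (l : ℕ → ℕ) (n : ℕ) : GW :=
  (gword l (n + 1)).getD n GW.a

/-- The language of the `l`-Grigorchuk subshift: all factors of `η_l`. -/
noncomputable def LangG (l : ℕ → ℕ) : Set (List GW) := LangX (etaG l)

/-- The prefix of `η_l` of length `k`. -/
noncomputable def prefEta (l : ℕ → ℕ) (k : ℕ) : List GW :=
  (List.range k).map (etaG l)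


section Aux

lemma gword_len (l : ℕ → ℕ) (j : ℕ) : (gword l j).length + 1 = 2 ^ (j + 1) := by
  induction j with
  | zero => rfl
  | succ j ih =>
    show (gword l j ++ letterAt l j :: gword l j).length + 1 = 2 ^ (j + 2)
    simp only [List.length_append, List.length_cons]
    rw [pow_succ]
    omega

lemma gword_len2 (l : ℕ → ℕ) (j d : ℕ) :
    (gword l (j + d)).length + 1 = 2 ^ d * ((gword l j).length + 1) := by
  induction d with
  | zero => simp
  | succ d ih =>
    show (gword l (j + d) ++ letterAt l (j + d) :: gword l (j + d)).length + 1 = _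
    simp only [List.length_append, List.length_cons]
    have h2 : 2 ^ (d + 1) * ((gword l j).length + 1)
        = 2 ^ d * ((gword l j).length + 1) + 2 ^ d * ((gword l j).length + 1) := by ring
    omega

lemma gword_prefix (l : ℕ → ℕ) {j j' : ℕ} (h : j ≤ j') : gword l j <+: gword l j' := by
  induction j', h using Nat.le_induction with
  | base => exact List.prefix_refl _
  | succ n hn ih =>
    exact ih.trans (List.prefix_append _ _)

lemma prefix_getD {w v : List GW} (h : w <+: v) {n : ℕ} (hn : n < w.length) :
    v.getD n GW.a = w.getD n GW.a := by
  obtain ⟨t, rfl⟩ := h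
  rw [List.getD_append _ _ _ _ hn]

lemma etaG_eq (l : ℕ → ℕ) (j n : ℕ) (hn : n < (gword l j).length) :
    etaG l n = (gword l j).getD n GW.a := by
  have hlen : n < (gword l (n + 1)).length := by
    have h1 := gword_len l (n + 1)
    have h2 : n + 1 + 1 < 2 ^ (n + 1 + 1) := Nat.lt_two_pow_self
    omega
  show (gword l (n + 1)).getD n GW.a = (gword l j).getD n GW.a
  rcases le_total j (n + 1) with h | h
  · exact prefix_getD (gword_prefix l h) hn
  · exact (prefix_getD (gword_prefix l h) hlen).symm

lemma gword_block (l : ℕ → ℕ) (j : ℕ) : ∀ d m i : ℕ, m < 2 ^ d → i < (gword l j).length →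
    (gword l (j + d)).getD (m * ((gword l j).length + 1) + i) GW.a
      = (gword l j).getD i GW.a := by
  intro d
  induction d with
  | zero =>
    intro m i hm hi
    interval_cases m
    simp
  | succ d ih =>
    intro m i hm hi
    have hW := gword_len2 l j d
    show (gword l (j + d) ++ letterAt l (j + d) :: gword l (j + d)).getD _ GW.a = _
    rcases lt_or_ge m (2 ^ d) with hm' | hm'
    · have h1 : (m + 1) * ((gword l j).length + 1) ≤ 2 ^ d * ((gword l j).length + 1) :=
        Nat.mul_le_mul_right _ hm'
      have h3 : (m + 1) * ((gword l j).length + 1)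
          = m * ((gword l j).length + 1) + ((gword l j).length + 1) := by ring
      have hpos : m * ((gword l j).length + 1) + i < (gword l (j + d)).length := by omega
      rw [List.getD_append _ _ _ _ hpos]
      exact ih m i hm' hi
    · set m' := m - 2 ^ d with hm'def
      have hm'' : m' < 2 ^ d := by
        have : m < 2 ^ d * 2 := by rw [← pow_succ]; exact hm
        omega
      have hmul : m * ((gword l j).length + 1)
          = 2 ^ d * ((gword l j).length + 1) + m' * ((gword l j).length + 1) := by
        rw [← add_mul]
        congr 1
        omega
      have key : m * ((gword l j).length + 1) + i
          = (gword l (j + d)).length + (m' * ((gword l j).length + 1) + i + 1) := by omega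
      rw [key, List.getD_append_right _ _ _ _ (Nat.le_add_right _ _)]
      simp only [Nat.add_sub_cancel_left]
      rw [List.getD_cons_succ]
      exact ih m' i hm'' hi

lemma etaG_block (l : ℕ → ℕ) (j m i : ℕ) (hi : i < (gword l j).length) :
    etaG l (m * ((gword l j).length + 1) + i) = etaG l i := by
  have hm : m < 2 ^ m := Nat.lt_two_pow_self (n := m)
  have h1 := gword_block l j m m i hm hi
  have hlen := gword_len2 l j m
  have hpos : m * ((gword l j).length + 1) + i < (gword l (j + m)).length := by
    have h2 : (m + 1) * ((gword l j).length + 1) ≤ 2 ^ m * ((gword l j).length + 1) :=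
      Nat.mul_le_mul_right _ hm
    have h3 : (m + 1) * ((gword l j).length + 1)
        = m * ((gword l j).length + 1) + ((gword l j).length + 1) := by ring
    omega
  rw [etaG_eq l (j + m) _ hpos, etaG_eq l j i hi, h1]

lemma grig_recur (l : ℕ → ℕ) : ∀ w ∈ LangG l, ∃ B : ℕ, ∀ n : ℕ, ∃ k : ℕ, n ≤ k ∧ k ≤ n + B ∧
    w = (List.range w.length).map fun i => etaG l (k + i) := by
  rintro w ⟨k, hw⟩
  set L := w.length with hL
  set j := k + L with hj
  have hLj : k + L < (gword l j).length := by
    have h1 := gword_len l j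
    have h2 := Nat.lt_two_pow_self (n := j + 1)
    omega
  set P := (gword l j).length + 1 with hP
  have hP0 : 0 < P := by omega
  refine ⟨P + k, fun n => ?_⟩
  set m := n / P + 1 with hm
  have hdm := Nat.div_add_mod n P
  have hmod : n % P < P := Nat.mod_lt _ hP0
  have hmul : m * P = P * (n / P) + P := by rw [hm]; ring
  refine ⟨m * P + k, by omega, by omega, ?_⟩
  rw [hw]
  apply List.map_congr_left
  intro i hi
  rw [List.mem_range] at hi
  have h1 : etaG l (m * P + (k + i)) = etaG l (k + i) := etaG_block l j m (k + i) (by omega)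
  rw [← add_assoc] at h1
  exact h1.symm

lemma shft_iter_apply {A : Type*} (p : ℕ) (y : ℕ → A) (n : ℕ) : shft^[p] y n = y (n + p) := by
  induction p generalizing y with
  | zero => rfl
  | succ p ih =>
    rw [Function.iterate_succ_apply, ih (shft y)]
    exact congrArg y (by omega)

lemma shft_cont {A : Type*} [TopologicalSpace A] : Continuous (shft : (ℕ → A) → (ℕ → A)) :=
  continuous_pi fun n => continuous_apply (n + 1)

lemma omega_shft_mem {x y : ℕ → GW} (hy : y ∈ OmegaOf x) (p : ℕ) : shft^[p] y ∈ OmegaOf x := by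
  have hc : Continuous (shft^[p] : (ℕ → GW) → (ℕ → GW)) := by
    induction p with
    | zero => exact continuous_id
    | succ p ih => rw [Function.iterate_succ]; exact ih.comp shft_cont
  have h1 : shft^[p] y ∈ shft^[p] '' (closure {y' | ∃ k, y' = shft^[k] x}) := ⟨y, hy, rfl⟩
  have h2 := image_closure_subset_closure_image (s := {y' | ∃ k, y' = shft^[k] x}) hc
  have h3 : shft^[p] '' {y' | ∃ k, y' = shft^[k] x} ⊆ {y' | ∃ k, y' = shft^[k] x} := by
    rintro _ ⟨z, ⟨q, rfl⟩, rfl⟩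
    exact ⟨p + q, (Function.iterate_add_apply _ _ _ _).symm⟩
  exact closure_mono h3 (h2 h1)

lemma omega_mono {x y : ℕ → GW} (hy : y ∈ OmegaOf x) : OmegaOf y ⊆ OmegaOf x := by
  apply closure_minimal _ isClosed_closure
  rintro _ ⟨q, rfl⟩
  exact omega_shft_mem hy q

lemma omega_approx {x y : ℕ → GW} (hy : y ∈ OmegaOf x) (L : ℕ) :
    ∃ q, ∀ i < L, y i = x (q + i) := by
  have hO : IsOpen {z : ℕ → GW | ∀ i < L, z i = y i} := by
    have hset : {z : ℕ → GW | ∀ i < L, z i = y i}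
        = ⋂ i ∈ Finset.range L, {z : ℕ → GW | z i = y i} := by
      ext z
      simp [Set.mem_iInter]
    rw [hset]
    refine isOpen_biInter_finset fun i _ => ?_
    have hc : Continuous (fun z : ℕ → GW => z i) := continuous_apply i
    exact hc.isOpen_preimage ({y i} : Set GW) (isOpen_discrete _)
  have hne := mem_closure_iff.mp hy _ hO (fun i _ => rfl)
  obtain ⟨z, hz, q, rfl⟩ := hne
  refine ⟨q, fun i hi => ?_⟩
  rw [← hz i hi, shft_iter_apply]
  exact congrArg x (Nat.add_comm i q)

lemma mem_omega_of_approx {x y : ℕ → GW} (h : ∀ L, ∃ p, ∀ i < L, shft^[p] y i = x i) :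
    x ∈ OmegaOf y := by
  unfold OmegaOf
  rw [mem_closure_iff]
  intro o ho hxo
  obtain ⟨I, u, hu, hsub⟩ := isOpen_pi_iff.mp ho x hxo
  obtain ⟨p, hp⟩ := h (I.sup id + 1)
  refine ⟨shft^[p] y, hsub fun i hi => ?_, ⟨p, rfl⟩⟩
  have hlt : i < I.sup id + 1 := Nat.lt_succ_of_le (Finset.le_sup (f := id) hi)
  rw [hp i hlt]
  exact (hu i hi).2

lemma range_map_eq {A : Type*} {L : ℕ} {f g : ℕ → A}
    (h : (List.range L).map f = (List.range L).map g) {i : ℕ} (hi : i < L) : f i = g i := by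
  have h1 := List.getElem_of_eq h (i := i) (by simpa using hi)
  simpa using h1

lemma eta_mem {l : ℕ → ℕ} {y : ℕ → GW} (hy : y ∈ OmegaOf (etaG l)) :
    etaG l ∈ OmegaOf y := by
  apply mem_omega_of_approx
  intro L
  have hmem : (List.range L).map (etaG l) ∈ LangG l := ⟨0, by simp⟩
  obtain ⟨B, hB⟩ := grig_recur l _ hmem
  obtain ⟨q, hq⟩ := omega_approx hy (L + B)
  obtain ⟨k', hk1, hk2, hk3⟩ := hB q
  simp only [List.length_map, List.length_range] at hk3
  refine ⟨k' - q, fun i hi => ?_⟩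
  have h1 : etaG l i = etaG l (k' + i) := range_map_eq hk3 hi
  rw [shft_iter_apply]
  have h2 : y (i + (k' - q)) = etaG l (q + (i + (k' - q))) := hq _ (by omega)
  rw [h2, show q + (i + (k' - q)) = k' + i by omega, ← h1]

end Aux

/-- Proposition 4.5: every `l`-Grigorchuk subshift is minimal;
equivalently, `η_l` is uniformly recurrent. -/
theorem grigorchuk_minimal (l : ℕ → ℕ) (hl : ∀ i, 0 < l i) :
    (∀ y ∈ OmegaOf (etaG l), OmegaOf y = OmegaOf (etaG l)) ∧
    (∀ w ∈ LangG l, ∃ B : ℕ, ∀ n : ℕ, ∃ k : ℕ, n ≤ k ∧ k ≤ n + B ∧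
      w = (List.range w.length).map fun i => etaG l (k + i)) := by
  constructor
  · intro y hy
    exact Set.Subset.antisymm (omega_mono hy) (omega_mono (eta_mem hy))
  · exact grig_recur l
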